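/- Let G be an infinite, connected, locally finite, edge-transitive graph with exactly two ends, and let S be a minimum-cardinality separator separating the two ends, with S^L and S^R the two infinite components of G − S. Then there is an automorphism ψ of G and a set C ∈ {S^L, S^R} such that ψ(C ∪ N(C)) ⊆ C and C \ ψ(C) is finite; in particular, G is a strip and ψ has infinite order. -/

import Mathlib

open SimpleGraph

/-- The automorphism group of `G`, as a subgroup of the symmetric group on the vertices. -/
def autGroup {V : Type*} (G : SimpleGraph V) : Subgroup (Equiv.Perm V) where
  carrier := {σ | ∀ a b, G.Adj (σ a) (σ b) ↔ G.Adj a b}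
  one_mem' := fun _ _ => Iff.rfl
  mul_mem' := by
    intro σ τ hσ hτ a b
    rw [Equiv.Perm.mul_apply, Equiv.Perm.mul_apply]
    exact (hσ _ _).trans (hτ _ _)
  inv_mem' := by
    intro σ hσ a b
    rw [← hσ (σ⁻¹ a) (σ⁻¹ b), Equiv.Perm.coe_inv, Equiv.apply_symm_apply, Equiv.apply_symm_apply]


/-- A graph is edge-transitive if any edge can be mapped to any other edge
(as unordered pairs) by an automorphism. -/
def EdgeTransitive {V : Type*} (G : SimpleGraph V) : Prop :=
  ∀ ⦃a b c d : V⦄, G.Adj a b → G.Adj c d →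
    ∃ σ : G ≃g G, (σ a = c ∧ σ b = d) ∨ (σ a = d ∧ σ b = c)

/-- The (open) neighborhood of a set of vertices. -/
def setNbhd {V : Type*} (G : SimpleGraph V) (C : Set V) : Set V :=
  {v | v ∉ C ∧ ∃ w ∈ C, G.Adj v w}


namespace SG14

variable {V : Type*} {G : SimpleGraph V}

/-- ball of radius n around a, via walks -/
def ball (G : SimpleGraph V) (a : V) (n : ℕ) : Set V :=
  {x | ∃ w : G.Walk a x, w.length ≤ n}

lemma mem_ball_self (a : V) (n : ℕ) : a ∈ ball G a n :=
  ⟨Walk.nil, by simp⟩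

lemma ball_mono {a : V} {m n : ℕ} (h : m ≤ n) : ball G a m ⊆ ball G a n := by
  rintro x ⟨w, hw⟩; exact ⟨w, hw.trans h⟩

lemma mem_ball_symm {a x : V} {n : ℕ} (h : x ∈ ball G a n) : a ∈ ball G x n := by
  obtain ⟨w, hw⟩ := h
  exact ⟨w.reverse, by simpa using hw⟩

lemma ball_trans {a x y : V} {m n : ℕ} (hx : x ∈ ball G a n) (hy : y ∈ ball G x m) :
    y ∈ ball G a (n + m) := by
  obtain ⟨w, hw⟩ := hx; obtain ⟨w', hw'⟩ := hy
  exact ⟨w.append w', by rw [Walk.length_append]; omega⟩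

lemma ball_finite (hlf : ∀ v : V, (G.neighborSet v).Finite) (a : V) (n : ℕ) :
    (ball G a n).Finite := by
  induction n generalizing a with
  | zero =>
    refine Set.Finite.subset (Set.finite_singleton a) ?_
    rintro x ⟨w, hw⟩
    simp [ (Walk.eq_of_length_eq_zero (Nat.le_zero.mp hw)).symm ]
  | succ n ih =>
    have hsub : ball G a (n+1) ⊆ {a} ∪ ⋃ y ∈ G.neighborSet a, ball G y n := by
      rintro x ⟨w, hw⟩
      cases w with
      | nil => exact Or.inl rfl
      | cons hadj p =>
        refine Or.inr ?_
        simp only [Set.mem_iUnion]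
        refine ⟨_, hadj, p, ?_⟩
        simpa using hw
    exact Set.Finite.subset ((Set.finite_singleton a).union
      ((hlf a).biUnion (fun y _ => ih y))) hsub

/-- there is a ball containing any finite set -/
lemma finite_subset_ball (hconn : G.Connected) {A : Set V} (hA : A.Finite) (a : V) :
    ∃ n : ℕ, A ⊆ ball G a n := by
  obtain ⟨F, rfl⟩ := hA.exists_finset_coe
  classical
  induction F using Finset.induction_on with
  | empty => exact ⟨0, by simp⟩
  | @insert x F hx ih =>
    obtain ⟨n, hn⟩ := ih F.finite_toSet
    obtain ⟨w⟩ := hconn a x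
    refine ⟨max w.length n, ?_⟩
    intro y hy
    rcases Finset.mem_insert.mp hy with rfl | hy
    · exact ⟨w, le_max_left _ _⟩
    · exact ball_mono (le_max_right _ _) (hn hy)

/-- reachability avoiding a set K -/
def AReach (G : SimpleGraph V) (K : Set V) (x y : V) : Prop :=
  ∃ w : G.Walk x y, ∀ z ∈ w.support, z ∉ K

lemma AReach.refl {K : Set V} {x : V} (hx : x ∉ K) : AReach G K x x :=
  ⟨Walk.nil, by simpa using hx⟩

lemma AReach.symm {K : Set V} {x y : V} (h : AReach G K x y) : AReach G K y x := by
  obtain ⟨w, hw⟩ := h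
  exact ⟨w.reverse, by simpa [Walk.support_reverse] using hw⟩

lemma AReach.trans {K : Set V} {x y z : V} (h : AReach G K x y) (h' : AReach G K y z) :
    AReach G K x z := by
  obtain ⟨w, hw⟩ := h; obtain ⟨w', hw'⟩ := h'
  refine ⟨w.append w', fun t ht => ?_⟩
  rw [Walk.mem_support_append_iff] at ht
  exact ht.elim (hw t) (hw' t)

lemma AReach.step {K : Set V} {x y : V} (h : G.Adj x y) (hx : x ∉ K) (hy : y ∉ K) :
    AReach G K x y :=
  ⟨Walk.cons h Walk.nil, by simp [hx, hy]⟩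

lemma AReach.not_mem_left {K : Set V} {x y : V} (h : AReach G K x y) : x ∉ K :=
  h.choose_spec x h.choose.start_mem_support

lemma AReach.not_mem_right {K : Set V} {x y : V} (h : AReach G K x y) : y ∉ K :=
  h.choose_spec y h.choose.end_mem_support

/-- closure along an avoiding walk -/
lemma AReach.closure {K D : Set V} (hD : ∀ a ∈ D, ∀ b, G.Adj a b → b ∈ D ∪ K)
    {x y : V} (h : AReach G K x y) (hx : x ∈ D) : y ∈ D := by
  obtain ⟨w, hw⟩ := h
  induction w with
  | nil => exact hx
  | @cons a b c hadj p ih =>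
    have hb : b ∉ K := hw b (by simp)
    have hbD : b ∈ D := by
      rcases hD a hx b hadj with h | h
      · exact h
      · exact absurd h hb
    exact ih hbD (fun z hz => hw z (by simp [hz]))

/-- the hom from an induced subgraph to the graph -/
def inducedHom (G : SimpleGraph V) (X : Set V) : G.induce X →g G :=
  ⟨Subtype.val, fun {a b} h => h⟩

lemma walk_in_of_reachable {X : Set V} {x y : V} (hx : x ∈ X) (hy : y ∈ X)
    (h : (G.induce X).Reachable ⟨x, hx⟩ ⟨y, hy⟩) :
    ∃ w : G.Walk x y, ∀ z ∈ w.support, z ∈ X := by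
  obtain ⟨p⟩ := h
  refine ⟨p.map (inducedHom G X), fun z hz => ?_⟩
  have hz' : z ∈ p.support.map (inducedHom G X) := Walk.support_map (inducedHom G X) p ▸ hz
  rw [List.mem_map] at hz'
  obtain ⟨u, _, rfl⟩ := hz'
  exact u.2

lemma walk_in_set {X : Set V} (hX : (G.induce X).Connected) {x y : V}
    (hx : x ∈ X) (hy : y ∈ X) :
    ∃ w : G.Walk x y, ∀ z ∈ w.support, z ∈ X :=
  walk_in_of_reachable hx hy (hX ⟨x, hx⟩ ⟨y, hy⟩)

lemma ball_map (σ : G ≃g G) {a x : V} {n : ℕ} (h : x ∈ ball G a n) :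
    σ x ∈ ball G (σ a) n := by
  obtain ⟨w, hw⟩ := h
  exact ⟨w.map σ.toHom, by simpa using hw⟩

lemma areach_map (σ : G ≃g G) {K : Set V} {x y : V} (h : AReach G K x y) :
    AReach G (σ '' K) (σ x) (σ y) := by
  obtain ⟨w, hw⟩ := h
  refine ⟨w.map σ.toHom, fun z hz hzK => ?_⟩
  rw [Walk.support_map, List.mem_map] at hz
  obtain ⟨u, hu, rfl⟩ := hz
  obtain ⟨k, hk, hke⟩ := hzK
  exact hw u hu (by rwa [← σ.toEquiv.injective hke])

/-- connected components avoiding K, abstractly -/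
def IsComp (G : SimpleGraph V) (K X : Set V) : Prop :=
  X.Nonempty ∧ (∀ x ∈ X, x ∉ K) ∧ (∀ a ∈ X, ∀ b, G.Adj a b → b ∈ X ∪ K) ∧
    (∀ x ∈ X, ∀ y ∈ X, AReach G K x y)

lemma IsComp.mem_of_areach {K X : Set V} (h : IsComp G K X) {x y : V}
    (hx : x ∈ X) (hr : AReach G K x y) : y ∈ X :=
  hr.closure h.2.2.1 hx

lemma IsComp.eq_of_inter {K X Y : Set V} (hX : IsComp G K X) (hY : IsComp G K Y)
    (h : (X ∩ Y).Nonempty) : X = Y := by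
  obtain ⟨z, hzX, hzY⟩ := h
  apply Set.eq_of_subset_of_subset
  · intro x hx
    exact hY.mem_of_areach hzY (hX.2.2.2 z hzX x hx)
  · intro y hy
    exact hX.mem_of_areach hzX (hY.2.2.2 z hzY y hy)

lemma IsComp.image (σ : G ≃g G) {K X : Set V} (h : IsComp G K X) :
    IsComp G (σ '' K) (σ '' X) := by
  obtain ⟨⟨x0, hx0⟩, hdisj, hcl, hre⟩ := h
  refine ⟨⟨σ x0, x0, hx0, rfl⟩, ?_, ?_, ?_⟩
  · rintro _ ⟨x, hx, rfl⟩ ⟨k, hk, hke⟩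
    exact hdisj x hx (by rwa [← σ.toEquiv.injective hke])
  · rintro _ ⟨x, hx, rfl⟩ b hadj
    have : G.Adj x (σ.symm b) := by
      have := σ.symm.map_adj_iff.mpr hadj
      simpa using this
    rcases hcl x hx _ this with hb | hb
    · exact Or.inl ⟨_, hb, by simp⟩
    · exact Or.inr ⟨_, hb, by simp⟩
  · rintro _ ⟨x, hx, rfl⟩ _ ⟨y, hy, rfl⟩
    exact areach_map σ (hre x hx y hy)

/-- exiting a set K: walk from outside K into K -/
lemma exit_lemma {K : Set V} : ∀ {x y : V} (w : G.Walk x y), x ∉ K → y ∈ K →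
    ∃ t z : V, G.Adj t z ∧ z ∈ K ∧ AReach G K x t := by
  intro x y w
  induction w with
  | nil => intro hx hy; exact absurd hy hx
  | @cons a b c hadj p ih =>
    intro hx hy
    by_cases hb : b ∈ K
    · exact ⟨a, b, hadj, hb, AReach.refl hx⟩
    · obtain ⟨t, z, h1, h2, h3⟩ := ih hb hy
      exact ⟨t, z, h1, h2, (AReach.step hadj hx hb).trans h3⟩

lemma exists_adj [Infinite V] (hconn : G.Connected) (v : V) : ∃ u, G.Adj v u := by
  obtain ⟨y, hy⟩ := exists_ne v
  obtain ⟨w⟩ := hconn v y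
  cases w with
  | nil => exact absurd rfl hy
  | cons hadj _ => exact ⟨_, hadj⟩

lemma walk_support_in {K D : Set V} (hD : ∀ a ∈ D, ∀ b, G.Adj a b → b ∈ D ∪ K) :
    ∀ {x y : V} (w : G.Walk x y), (∀ z ∈ w.support, z ∉ K) → x ∈ D →
      ∀ z ∈ w.support, z ∈ D := by
  intro x y w
  induction w with
  | nil =>
    intro _ hx z hz
    rw [Walk.mem_support_nil_iff] at hz
    exact hz ▸ hx
  | @cons a b c hadj p ih =>
    intro hw hx z hz
    have hb : b ∈ D := by
      rcases hD a hx b hadj with h | h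
      · exact h
      · exact absurd h (hw b (by simp))
    rw [Walk.support_cons, List.mem_cons] at hz
    rcases hz with rfl | hz
    · exact hx
    · exact ih (fun q hq => hw q (by simp [hq])) hb z hz

end SG14

open CategoryTheory in
lemma no_three_comps {V : Type*} (G : SimpleGraph V) (hconn : G.Connected)
    (hlf : ∀ v : V, (G.neighborSet v).Finite) (hends : Nat.card G.end = 2)
    (K : Set V) (hK : K.Finite) (D : Fin 3 → Set V)
    (hinf : ∀ i, (D i).Infinite)
    (hcl : ∀ i, ∀ a ∈ D i, ∀ b, G.Adj a b → b ∈ D i ∪ K)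
    (hdisj : ∀ i j, i ≠ j → Disjoint (D i) (D j)) : False := by
  classical
  haveI : G.LocallyFinite := fun v => (hlf v).fintype
  haveI : Fact G.Preconnected := ⟨hconn.preconnected⟩
  set L0 : (Finset V)ᵒᵖ := Opposite.op hK.toFinset with hL0
  have main : ∀ i : Fin 3, ∃ e : G.end,
      ∀ L : (Finset V)ᵒᵖ, ((SimpleGraph.ComponentCompl.supp (e.1 L)) ∩ D i).Infinite := by
    intro i
    let F : (Finset V)ᵒᵖ ⥤ Type _ :=
      { obj := fun L => {C : G.ComponentCompl L.unop // ((C : Set V) ∩ D i).Infinite}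
        map := fun {L L'} f => TypeCat.ofHom fun C => ⟨C.1.hom (le_of_op_hom f),
          C.2.mono (Set.inter_subset_inter_left _ (C.1.subset_hom _))⟩
        map_id := fun L => ConcreteCategory.hom_ext _ _ fun C => Subtype.ext (C.1.hom_refl)
        map_comp := fun {L L' L''} f g => ConcreteCategory.hom_ext _ _ fun C => Subtype.ext (by
          have hf : ((Opposite.unop L' : Finset V) : Set V) ⊆ ((Opposite.unop L : Finset V) : Set V) := by
            exact_mod_cast le_of_op_hom f
          have hg : ((Opposite.unop L'' : Finset V) : Set V) ⊆ ((Opposite.unop L' : Finset V) : Set V) := by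
            exact_mod_cast le_of_op_hom g
          exact C.1.hom_trans hf hg) }
    haveI hFin : ∀ L : (Finset V)ᵒᵖ, Finite (F.obj L) := fun L => Subtype.finite
    haveI hNe : ∀ L : (Finset V)ᵒᵖ, Nonempty (F.obj L) := by
      intro L
      by_contra hempty
      rw [not_nonempty_iff] at hempty
      have hcover : D i ⊆ (↑L.unop : Set V) ∪
          ⋃ C : G.ComponentCompl L.unop, ((C : Set V) ∩ D i) := by
        intro v hv
        by_cases hvL : v ∈ (↑L.unop : Set V)
        · exact Or.inl hvL
        · exact Or.inr (Set.mem_iUnion.mpr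
            ⟨G.componentComplMk hvL, G.componentComplMk_mem hvL, hv⟩)
      have hfin : ((↑L.unop : Set V) ∪
          ⋃ C : G.ComponentCompl L.unop, ((C : Set V) ∩ D i)).Finite := by
        refine (L.unop.finite_toSet).union (Set.finite_iUnion fun C => ?_)
        by_contra hCinf
        exact hempty.false ⟨C, hCinf⟩
      exact (hinf i) (hfin.subset hcover)
    obtain ⟨s, hs⟩ := nonempty_sections_of_finite_inverse_system F
    refine ⟨⟨fun L => (s L).1, fun {j j'} f => congrArg Subtype.val (hs f)⟩, fun L => (s L).2⟩
  have hsub : ∀ (i : Fin 3) (e : G.end), ((SimpleGraph.ComponentCompl.supp (e.1 L0)) ∩ D i).Infinite →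
      SimpleGraph.ComponentCompl.supp (e.1 L0) ⊆ D i := by
    intro i e hinf' v hv
    obtain ⟨d, hdC, hdD⟩ := hinf'.nonempty
    obtain ⟨hd', hd⟩ := (SimpleGraph.ComponentCompl.mem_supp_iff).mp hdC
    obtain ⟨hv', hv2⟩ := (SimpleGraph.ComponentCompl.mem_supp_iff).mp hv
    have hreach : (G.induce ((↑L0.unop : Set V))ᶜ).Reachable ⟨d, hd'⟩ ⟨v, hv'⟩ := by
      have := hd.trans hv2.symm
      exact (SimpleGraph.ConnectedComponent.eq).mp this
    obtain ⟨w, hw⟩ := SG14.walk_in_of_reachable (G := G) hd' hv' hreach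
    have hKeq : (↑L0.unop : Set V) = K := by rw [hL0]; simp [Set.Finite.coe_toFinset]
    have : SG14.AReach G K d v := by
      refine ⟨w, fun z hz => ?_⟩
      have := hw z hz
      rw [hKeq] at this
      exact this
    exact this.closure (hcl i) hdD
  obtain ⟨e0, h0⟩ := main 0
  obtain ⟨e1, h1⟩ := main 1
  obtain ⟨e2, h2⟩ := main 2
  have hne : ∀ (i j : Fin 3) (ei ej : G.end), i ≠ j →
      ((SimpleGraph.ComponentCompl.supp (ei.1 L0)) ∩ D i).Infinite → ((SimpleGraph.ComponentCompl.supp (ej.1 L0)) ∩ D j).Infinite →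
      ei ≠ ej := by
    intro i j ei ej hij hi hj heq
    obtain ⟨x, hx⟩ := SimpleGraph.ComponentCompl.nonempty (ei.1 L0)
    have hxj : x ∈ SimpleGraph.ComponentCompl.supp (ej.1 L0) := heq ▸ hx
    exact Set.disjoint_left.mp (hdisj i j hij) (hsub i ei hi hx) (hsub j ej hj hxj)
  have hne01 : e0 ≠ e1 := hne 0 1 e0 e1 (by decide) (h0 L0) (h1 L0)
  have hne02 : e0 ≠ e2 := hne 0 2 e0 e2 (by decide) (h0 L0) (h2 L0)
  have hne12 : e1 ≠ e2 := hne 1 2 e1 e2 (by decide) (h1 L0) (h2 L0)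
  rw [Nat.card_eq_two_iff] at hends
  obtain ⟨x, y, hxy, huniv⟩ := hends
  have hmem : ∀ e : G.end, e = x ∨ e = y := by
    intro e
    have : e ∈ ({x, y} : Set G.end) := huniv.symm ▸ Set.mem_univ e
    simpa using this
  rcases hmem e0 with h0' | h0' <;> rcases hmem e1 with h1' | h1' <;>
    rcases hmem e2 with h2' | h2'
  · exact hne01 (h0'.trans h1'.symm)
  · exact hne01 (h0'.trans h1'.symm)
  · exact hne02 (h0'.trans h2'.symm)
  · exact hne12 (h1'.trans h2'.symm)
  · exact hne12 (h1'.trans h2'.symm)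
  · exact hne02 (h0'.trans h2'.symm)
  · exact hne01 (h0'.trans h1'.symm)
  · exact hne01 (h0'.trans h1'.symm)

open SG14 in
lemma no_three_comps' {V : Type*} (G : SimpleGraph V) (hconn : G.Connected)
    (hlf : ∀ v : V, (G.neighborSet v).Finite) (hends : Nat.card G.end = 2)
    (K : Set V) (hK : K.Finite) (D1 D2 D3 : Set V)
    (h1 : D1.Infinite) (h2 : D2.Infinite) (h3 : D3.Infinite)
    (c1 : ∀ a ∈ D1, ∀ b, G.Adj a b → b ∈ D1 ∪ K)
    (c2 : ∀ a ∈ D2, ∀ b, G.Adj a b → b ∈ D2 ∪ K)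
    (c3 : ∀ a ∈ D3, ∀ b, G.Adj a b → b ∈ D3 ∪ K)
    (d12 : ∀ x, x ∈ D1 → x ∈ D2 → False)
    (d13 : ∀ x, x ∈ D1 → x ∈ D3 → False)
    (d23 : ∀ x, x ∈ D2 → x ∈ D3 → False) : False := by
  refine no_three_comps G hconn hlf hends K hK ![D1, D2, D3] ?_ ?_ ?_
  · intro i; fin_cases i <;> simpa
  · intro i; fin_cases i <;> simpa
  · intro i j hij
    fin_cases i <;> fin_cases j <;>
      first
      | exact absurd rfl hij
      | (rw [Set.disjoint_left]; intro x hx hy; simp only [Matrix.cons_val_zero,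
          Matrix.cons_val_one, Matrix.head_cons, Matrix.cons_val_two, Matrix.tail_cons] at hx hy;
         first
         | exact d12 x hx hy
         | exact d12 x hy hx
         | exact d13 x hx hy
         | exact d13 x hy hx
         | exact d23 x hx hy
         | exact d23 x hy hx)

open SG14

/-- let `G` be an infinite, connected, locally finite, edge-transitive
graph with exactly two ends, `S` a minimum separator separating the two ends, and
`SL`, `SR` the two infinite components of `G − S`.  Then there is an automorphism `ψ`
of `G` and `C ∈ {SL, SR}` with `ψ(C ∪ N(C)) ⊆ C` and `C \ ψ(C)` finite; in particular
`G` is a strip and `ψ` has infinite order. -/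
theorem stmt_14 {V : Type*} [Infinite V] (G : SimpleGraph V)
    (hconn : G.Connected)
    (hlf : ∀ v : V, (G.neighborSet v).Finite)
    (het : EdgeTransitive G)
    (hends : Nat.card G.end = 2)
    (S SL SR : Set V) (hSfin : S.Finite)
    (hLS : Disjoint SL S) (hRS : Disjoint SR S) (hLR : Disjoint SL SR)
    (hLinf : SL.Infinite) (hRinf : SR.Infinite)
    (hLconn : (G.induce SL).Connected) (hRconn : (G.induce SR).Connected)
    (hLclosed : ∀ a ∈ SL, ∀ b : V, G.Adj a b → b ∈ SL ∪ S)
    (hRclosed : ∀ a ∈ SR, ∀ b : V, G.Adj a b → b ∈ SR ∪ S)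
    -- S is of minimum cardinality among finite vertex sets whose removal leaves
    -- two disjoint infinite adjacency-closed parts (i.e. separating the two ends)
    (hmin : ∀ S' : Set V, S'.Finite →
      (∃ A B : Set V, Disjoint A S' ∧ Disjoint B S' ∧ Disjoint A B ∧
        A.Infinite ∧ B.Infinite ∧
        (∀ a ∈ A, ∀ b : V, G.Adj a b → b ∈ A ∪ S') ∧
        (∀ a ∈ B, ∀ b : V, G.Adj a b → b ∈ B ∪ S')) →
      S.ncard ≤ S'.ncard) :
    ∃ ψ ∈ autGroup G, ∃ C : Set V, (C = SL ∨ C = SR) ∧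
      (⇑ψ '' (C ∪ setNbhd G C) ⊆ C) ∧
      (C \ ⇑ψ '' C).Finite ∧
      (setNbhd G C).Nonempty ∧ (setNbhd G C).Finite ∧
      (∀ n : ℕ, 0 < n → ψ ^ n ≠ 1) := by
  classical
  set Fset : Set V := (SL ∪ S ∪ SR)ᶜ with hFsetdef
  -- membership basics
  have dLS : ∀ x ∈ SL, x ∉ S := fun x hx hs => Set.disjoint_left.mp hLS hx hs
  have dRS : ∀ x ∈ SR, x ∉ S := fun x hx hs => Set.disjoint_left.mp hRS hx hs
  have dLR : ∀ x ∈ SL, x ∉ SR := fun x hx hs => Set.disjoint_left.mp hLR hx hs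
  have dFx : ∀ x ∈ Fset, x ∉ SL ∧ x ∉ S ∧ x ∉ SR := by
    intro x hx
    refine ⟨fun h => hx (Or.inl (Or.inl h)), fun h => hx (Or.inl (Or.inr h)),
      fun h => hx (Or.inr h)⟩
  have hcases : ∀ x : V, x ∈ SL ∨ x ∈ S ∨ x ∈ SR ∨ x ∈ Fset := by
    intro x
    by_cases h1 : x ∈ SL; · exact Or.inl h1
    by_cases h2 : x ∈ S; · exact Or.inr (Or.inl h2)
    by_cases h3 : x ∈ SR; · exact Or.inr (Or.inr (Or.inl h3))
    exact Or.inr (Or.inr (Or.inr (fun h => by rcases h with h | h; exact (h.elim h1 h2); exact h3 h)))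
  -- Fset is closed with boundary in S
  have hFcl : ∀ a ∈ Fset, ∀ b, G.Adj a b → b ∈ Fset ∪ S := by
    intro a ha b hadj
    rcases hcases b with hb | hb | hb | hb
    · rcases hLclosed b hb a hadj.symm with h | h
      · exact absurd h (dFx a ha).1
      · exact absurd h (dFx a ha).2.1
    · exact Or.inr hb
    · rcases hRclosed b hb a hadj.symm with h | h
      · exact absurd h (dFx a ha).2.2
      · exact absurd h (dFx a ha).2.1
    · exact Or.inl hb
  -- S is nonempty
  have hSne : S.Nonempty := by
    by_contra hS
    rw [Set.not_nonempty_iff_eq_empty] at hS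
    obtain ⟨x, hx⟩ := hLinf.nonempty
    obtain ⟨y, hy⟩ := hRinf.nonempty
    obtain ⟨w⟩ := hconn x y
    have : AReach G (∅ : Set V) x y := ⟨w, by simp⟩
    have hyL : y ∈ SL := this.closure (fun a ha b hb => by
      have := hLclosed a ha b hb; rwa [hS] at this) hx
    exact dLR y hyL hy
  -- SL and SR are components
  have hCompL : IsComp G S SL := by
    refine ⟨hLinf.nonempty, dLS, hLclosed, fun x hx y hy => ?_⟩
    obtain ⟨w, hw⟩ := walk_in_set hLconn hx hy
    exact ⟨w, fun z hz => dLS z (hw z hz)⟩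
  have hCompR : IsComp G S SR := by
    refine ⟨hRinf.nonempty, dRS, hRclosed, fun x hx y hy => ?_⟩
    obtain ⟨w, hw⟩ := walk_in_set hRconn hx hy
    exact ⟨w, fun z hz => dRS z (hw z hz)⟩
  -- every vertex of S has neighbours on both sides
  have nbrR : ∀ s ∈ S, ∃ r ∈ SR, G.Adj s r := by
    intro s hs
    by_contra hno
    push_neg at hno
    have hpred : ∃ A B : Set V, Disjoint A (S \ {s}) ∧ Disjoint B (S \ {s}) ∧ Disjoint A B ∧
        A.Infinite ∧ B.Infinite ∧
        (∀ a ∈ A, ∀ b : V, G.Adj a b → b ∈ A ∪ (S \ {s})) ∧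
        (∀ a ∈ B, ∀ b : V, G.Adj a b → b ∈ B ∪ (S \ {s})) := by
      refine ⟨SL ∪ {s} ∪ Fset, SR, ?_, ?_, ?_, ?_, hRinf, ?_, ?_⟩
      · rw [Set.disjoint_left]
        rintro x ((hx | hxs1) | hx) ⟨hxS, hxs⟩
        · exact dLS x hx hxS
        · exact hxs hxs1
        · exact (dFx x hx).2.1 hxS
      · rw [Set.disjoint_left]; exact fun x hx ⟨hxS, _⟩ => dRS x hx hxS
      · rw [Set.disjoint_left]
        rintro x ((hx | hxs1) | hx) hxR
        · exact dLR x hx hxR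
        · exact (dRS x hxR (by rw [Set.mem_singleton_iff] at hxs1; rwa [hxs1])).elim
        · exact (dFx x hx).2.2 hxR
      · exact hLinf.mono (fun x hx => Or.inl (Or.inl hx))
      · rintro a ((ha | has) | ha) b hadj
        · rcases hLclosed a ha b hadj with hb | hb
          · exact Or.inl (Or.inl (Or.inl hb))
          · by_cases hbs : b = s
            · exact Or.inl (Or.inl (Or.inr hbs))
            · exact Or.inr ⟨hb, hbs⟩
        · rw [Set.mem_singleton_iff] at has
          have hbR : b ∉ SR := fun hbR => hno b hbR (has ▸ hadj)
          rcases hcases b with hb | hb | hb | hb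
          · exact Or.inl (Or.inl (Or.inl hb))
          · by_cases hbs : b = s
            · exact Or.inl (Or.inl (Or.inr hbs))
            · exact Or.inr ⟨hb, hbs⟩
          · exact absurd hb hbR
          · exact Or.inl (Or.inr hb)
        · rcases hFcl a ha b hadj with hb | hb
          · exact Or.inl (Or.inr hb)
          · by_cases hbs : b = s
            · exact Or.inl (Or.inl (Or.inr hbs))
            · exact Or.inr ⟨hb, hbs⟩
      · intro a ha b hadj
        rcases hRclosed a ha b hadj with hb | hb
        · exact Or.inl hb
        · by_cases hbs : b = s
          · subst hbs; exact absurd hadj.symm (hno a ha)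
          · exact Or.inr ⟨hb, hbs⟩
    have hle := hmin (S \ {s}) hSfin.diff hpred
    have hlt : (S \ {s}).ncard < S.ncard :=
      Set.ncard_lt_ncard (Set.sdiff_singleton_ssubset.mpr hs) hSfin
    omega
  have nbrL : ∀ s ∈ S, ∃ l ∈ SL, G.Adj s l := by
    intro s hs
    by_contra hno
    push_neg at hno
    have hpred : ∃ A B : Set V, Disjoint A (S \ {s}) ∧ Disjoint B (S \ {s}) ∧ Disjoint A B ∧
        A.Infinite ∧ B.Infinite ∧
        (∀ a ∈ A, ∀ b : V, G.Adj a b → b ∈ A ∪ (S \ {s})) ∧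
        (∀ a ∈ B, ∀ b : V, G.Adj a b → b ∈ B ∪ (S \ {s})) := by
      refine ⟨SR ∪ {s} ∪ Fset, SL, ?_, ?_, ?_, ?_, hLinf, ?_, ?_⟩
      · rw [Set.disjoint_left]
        rintro x ((hx | hxs1) | hx) ⟨hxS, hxs⟩
        · exact dRS x hx hxS
        · exact hxs hxs1
        · exact (dFx x hx).2.1 hxS
      · rw [Set.disjoint_left]; exact fun x hx ⟨hxS, _⟩ => dLS x hx hxS
      · rw [Set.disjoint_left]
        rintro x ((hx | hxs1) | hx) hxL
        · exact dLR x hxL hx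
        · exact (dLS x hxL (by rw [Set.mem_singleton_iff] at hxs1; rwa [hxs1])).elim
        · exact (dFx x hx).1 hxL
      · exact hRinf.mono (fun x hx => Or.inl (Or.inl hx))
      · rintro a ((ha | has) | ha) b hadj
        · rcases hRclosed a ha b hadj with hb | hb
          · exact Or.inl (Or.inl (Or.inl hb))
          · by_cases hbs : b = s
            · exact Or.inl (Or.inl (Or.inr hbs))
            · exact Or.inr ⟨hb, hbs⟩
        · rw [Set.mem_singleton_iff] at has
          have hbL : b ∉ SL := fun hbL => hno b hbL (has ▸ hadj)
          rcases hcases b with hb | hb | hb | hb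
          · exact absurd hb hbL
          · by_cases hbs : b = s
            · exact Or.inl (Or.inl (Or.inr hbs))
            · exact Or.inr ⟨hb, hbs⟩
          · exact Or.inl (Or.inl (Or.inl hb))
          · exact Or.inl (Or.inr hb)
        · rcases hFcl a ha b hadj with hb | hb
          · exact Or.inl (Or.inr hb)
          · by_cases hbs : b = s
            · exact Or.inl (Or.inl (Or.inr hbs))
            · exact Or.inr ⟨hb, hbs⟩
      · intro a ha b hadj
        rcases hLclosed a ha b hadj with hb | hb
        · exact Or.inl hb
        · by_cases hbs : b = s
          · subst hbs; exact absurd hadj.symm (hno a ha)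
          · exact Or.inr ⟨hb, hbs⟩
    have hle := hmin (S \ {s}) hSfin.diff hpred
    have hlt : (S \ {s}).ncard < S.ncard :=
      Set.ncard_lt_ncard (Set.sdiff_singleton_ssubset.mpr hs) hSfin
    omega
    -- fix a base vertex in S and a neighbour in SL
  obtain ⟨a0, ha0⟩ := hSne
  obtain ⟨b0, hb0SL, hb0adj⟩ := nbrL a0 ha0
  -- a radius containing S and Fset
  have hcompFin : ∀ w ∈ Fset, {y | AReach G S w y}.Finite := by
    intro w hw
    by_contra hinf
    refine no_three_comps' G hconn hlf hends S hSfin SL SR {y | AReach G S w y}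
      hLinf hRinf hinf hLclosed hRclosed ?_ ?_ ?_ ?_
    · intro a ha b hadj
      by_cases hb : b ∈ S
      · exact Or.inr hb
      · exact Or.inl (ha.trans (AReach.step hadj ha.not_mem_right hb))
    · exact fun x hx hy => dLR x hx hy
    · intro x hx hy
      have : x ∈ Fset := hy.closure hFcl hw
      exact (dFx x this).1 hx
    · intro x hx hy
      have : x ∈ Fset := hy.closure hFcl hw
      exact (dFx x this).2.2 hx
  have hFfin : Fset.Finite := by
    have hNS : ({x | ∃ s ∈ S, G.Adj s x} ∩ Fset).Finite := by
      refine Set.Finite.inter_of_left (Set.Finite.subset (hSfin.biUnion (fun s _ => hlf s)) ?_) _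
      rintro x ⟨s, hs, hadj⟩
      exact Set.mem_biUnion hs hadj
    have hFsub : Fset ⊆ ⋃ w ∈ ({x | ∃ s ∈ S, G.Adj s x} ∩ Fset), {y | AReach G S w y} := by
      intro f hf
      obtain ⟨w⟩ := hconn f a0
      obtain ⟨t, z, hadj, hzS, hreach⟩ := exit_lemma w (dFx f hf).2.1 ha0
      have htF : t ∈ Fset := hreach.closure hFcl hf
      exact Set.mem_biUnion ⟨⟨z, hzS, hadj.symm⟩, htF⟩ hreach.symm
    exact Set.Finite.subset (hNS.biUnion (fun w hw => hcompFin w hw.2)) hFsub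
  obtain ⟨D0, hD0⟩ := finite_subset_ball hconn (hSfin.union hFfin) a0
  -- the main construction of a translate deep inside SL
  have stage : ∀ r : ℕ, 2*D0 + 2 ≤ r → ∀ v ∈ SL, v ∉ SG14.ball G a0 (r + D0 + 2) →
      ∃ σ : G ≃g G,
        (∀ x ∈ SG14.ball G a0 r, σ x ∈ SG14.ball G v (r+1)) ∧
        (SG14.ball G v (r+1) ⊆ SL) ∧
        ((S ∪ SR ∪ Fset) ⊆ σ '' SL ∨ (S ∪ SR ∪ Fset) ⊆ σ '' SR) := by
    intro r hr v hvSL hvfar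
    obtain ⟨u, hu⟩ := exists_adj hconn v
    obtain ⟨σ, hσ⟩ := het hb0adj hu
    have hanchor : σ a0 ∈ SG14.ball G v 1 := by
      rcases hσ with ⟨h1, _⟩ | ⟨h1, _⟩
      · rw [h1]; exact mem_ball_self v 1
      · rw [h1]; exact ⟨Walk.cons hu Walk.nil, by simp⟩
    have hmap : ∀ x ∈ SG14.ball G a0 r, σ x ∈ SG14.ball G v (r+1) := by
      intro x hx
      have h2 := ball_map σ hx
      have h3 := ball_trans hanchor h2
      exact ball_mono (by omega) h3
    have hballSL : SG14.ball G v (r+1) ⊆ SL := by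
      intro y hy
      obtain ⟨w, hw⟩ := hy
      by_cases hav : ∀ z ∈ w.support, z ∉ S
      · exact hCompL.mem_of_areach hvSL ⟨w, hav⟩
      · push_neg at hav
        obtain ⟨z, hz, hzS⟩ := hav
        have hz1 : z ∈ SG14.ball G v (r+1) :=
          ⟨w.takeUntil z hz, (w.length_takeUntil_le hz).trans hw⟩
        have hz2 : z ∈ SG14.ball G a0 D0 := hD0 (Or.inl hzS)
        have : v ∈ SG14.ball G a0 (r + D0 + 2) :=
          ball_mono (by omega) (ball_trans hz2 (mem_ball_symm hz1))
        exact absurd this hvfar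
    refine ⟨σ, hmap, hballSL, ?_⟩
    -- the image of S and Fset lie deep in SL
    have hTS : σ '' S ⊆ SL := by
      rintro _ ⟨s, hs, rfl⟩
      exact hballSL (hmap s (ball_mono (by omega) (hD0 (Or.inl hs))))
    have hFS : σ '' Fset ⊆ SL := by
      rintro _ ⟨s, hs, rfl⟩
      exact hballSL (hmap s (ball_mono (by omega) (hD0 (Or.inr hs))))
    obtain ⟨r0, hr0⟩ := hRinf.nonempty
    have hTdisj : ∀ x, x ∈ σ '' S → x ∈ SL := fun x hx => hTS hx
    -- everything on the near side reaches r0 avoiding T = σ '' S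
    have hUreach : ∀ x, (x ∈ S ∪ SR ∪ Fset) → AReach G (σ '' S) x r0 := by
      have hSRreach : ∀ x ∈ SR, AReach G (σ '' S) x r0 := by
        intro x hx
        obtain ⟨w, hw⟩ := walk_in_set hRconn hx hr0
        exact ⟨w, fun z hz hzT => dLR z (hTS hzT) (hw z hz)⟩
      have hSreach : ∀ x ∈ S, AReach G (σ '' S) x r0 := by
        intro x hx
        obtain ⟨rs, hrs, hadj⟩ := nbrR x hx
        refine (AReach.step hadj ?_ ?_).trans (hSRreach rs hrs)
        · exact fun hxT => dLS x (hTS hxT) hx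
        · exact fun hxT => dLR rs (hTS hxT) hrs
      rintro x (hx | hx)
      · rcases hx with hx | hx
        · exact hSreach x hx
        · exact hSRreach x hx
      · -- x ∈ Fset
        obtain ⟨w⟩ := hconn x a0
        obtain ⟨t, z, hadj, hzS, hreach⟩ := exit_lemma w (dFx x hx).2.1 ha0
        obtain ⟨w', hw'⟩ := hreach
        have hsup : ∀ q ∈ w'.support, q ∈ Fset :=
          walk_support_in hFcl w' hw' hx
        have h1 : AReach G (σ '' S) x t :=
          ⟨w', fun q hq hqT => (dFx q (hsup q hq)).1 (hTS hqT)⟩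
        refine (h1.trans (AReach.step hadj ?_ ?_)).trans (hSreach z hzS)
        · exact fun hqT => (dFx t (hsup t w'.end_mem_support)).1 (hTS hqT)
        · exact fun hqT => dLS z (hTS hqT) hzS
    -- classify the component of r0
    rcases hcases (σ.symm r0) with hy | hy | hy | hy
    · left
      have hr0A : r0 ∈ σ '' SL := ⟨σ.symm r0, hy, σ.apply_symm_apply r0⟩
      intro x hx
      exact (hCompL.image σ).mem_of_areach hr0A (hUreach x hx).symm
    · exfalso
      have : r0 ∈ σ '' S := ⟨σ.symm r0, hy, σ.apply_symm_apply r0⟩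
      exact dLR r0 (hTS this) hr0
    · right
      have hr0B : r0 ∈ σ '' SR := ⟨σ.symm r0, hy, σ.apply_symm_apply r0⟩
      intro x hx
      exact (hCompR.image σ).mem_of_areach hr0B (hUreach x hx).symm
    · exfalso
      set f0 := σ.symm r0 with hf0
      have hcomp : IsComp G S {y | AReach G S f0 y} := by
        refine ⟨⟨f0, AReach.refl (dFx f0 hy).2.1⟩, fun x hx => hx.not_mem_right, ?_, ?_⟩
        · intro a ha b hadj
          by_cases hb : b ∈ S
          · exact Or.inr hb
          · exact Or.inl (ha.trans (AReach.step hadj ha.not_mem_right hb))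
        · exact fun x hx y hy' => hx.symm.trans hy'
      have hXc : IsComp G (σ '' S) (σ '' {y | AReach G S f0 y}) := hcomp.image σ
      have hr0X : r0 ∈ σ '' {y | AReach G S f0 y} :=
        ⟨f0, AReach.refl (dFx f0 hy).2.1, σ.apply_symm_apply r0⟩
      have hSRX : SR ⊆ σ '' {y | AReach G S f0 y} := by
        intro x hx
        exact hXc.mem_of_areach hr0X (hUreach x (Or.inl (Or.inr hx))).symm
      have hXfin : (σ '' {y | AReach G S f0 y}).Finite := by
        refine Set.Finite.image _ (Set.Finite.subset hFfin ?_)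
        intro y hy'
        exact hy'.closure hFcl hy
      exact hRinf (hXfin.subset hSRX)
    -- neighbourhood of SL
  have hnbS : setNbhd G SL ⊆ S := by
    rintro x ⟨hxn, w, hw, hadj⟩
    rcases hLclosed w hw x hadj.symm with h | h
    · exact absurd h hxn
    · exact h
  have ha0nb : a0 ∈ setNbhd G SL := ⟨fun h => dLS a0 h ha0, b0, hb0SL, hb0adj⟩
  -- packaging a suitable automorphism into the final statement
  have finish : ∀ σ : G ≃g G, (∀ x, x ∈ SL ∪ S → σ x ∈ SL) → (SL \ ⇑σ '' SL).Finite →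
      ∃ ψ ∈ autGroup G, ∃ C : Set V, (C = SL ∨ C = SR) ∧
        (⇑ψ '' (C ∪ setNbhd G C) ⊆ C) ∧
        (C \ ⇑ψ '' C).Finite ∧
        (setNbhd G C).Nonempty ∧ (setNbhd G C).Finite ∧
        (∀ n : ℕ, 0 < n → ψ ^ n ≠ 1) := by
    intro σ hsub hfin
    have hcoe : ∀ x : V, σ.toEquiv x = σ x := fun _ => rfl
    have hmem : σ.toEquiv ∈ autGroup G := fun a b => σ.map_adj_iff
    refine ⟨σ.toEquiv, hmem, SL, Or.inl rfl, ?_, ?_, ⟨a0, ha0nb⟩, hSfin.subset hnbS, ?_⟩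
    · rintro _ ⟨x, hx, rfl⟩
      rcases hx with hx | hx
      · exact hsub x (Or.inl hx)
      · exact hsub x (Or.inr (hnbS hx))
    · exact hfin
    · intro n hn heq
      have hiter : ∀ m : ℕ, ∀ x, x ∈ SL ∪ setNbhd G SL → (σ.toEquiv ^ (m+1)) x ∈ SL := by
        intro m
        induction m with
        | zero =>
          intro x hx
          rw [pow_one]
          rcases hx with hx | hx
          · exact hsub x (Or.inl hx)
          · exact hsub x (Or.inr (hnbS hx))
        | succ m ih =>
          intro x hx
          have h1 : σ.toEquiv x ∈ SL := by
            rcases hx with hx | hx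
            · exact hsub x (Or.inl hx)
            · exact hsub x (Or.inr (hnbS hx))
          have h2 : (σ.toEquiv ^ (m+1+1)) x = (σ.toEquiv ^ (m+1)) (σ.toEquiv x) := by
            rw [pow_succ, Equiv.Perm.mul_apply]
          rw [h2]
          exact ih _ (Or.inl h1)
      obtain ⟨m, rfl⟩ : ∃ m, n = m + 1 := ⟨n - 1, by omega⟩
      have hfin' := hiter m a0 (Or.inr ha0nb)
      rw [heq] at hfin'
      exact dLS a0 (by simpa using hfin') ha0
  -- the "good orientation" case
  have case_good : ∀ σ : G ≃g G, σ '' S ⊆ SL → σ '' Fset ⊆ SL →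
      (S ∪ SR ∪ Fset) ⊆ σ '' SR →
      ∃ ψ ∈ autGroup G, ∃ C : Set V, (C = SL ∨ C = SR) ∧
        (⇑ψ '' (C ∪ setNbhd G C) ⊆ C) ∧
        (C \ ⇑ψ '' C).Finite ∧
        (setNbhd G C).Nonempty ∧ (setNbhd G C).Finite ∧
        (∀ n : ℕ, 0 < n → ψ ^ n ≠ 1) := by
    intro σ hTS hFS hUB
    have hinj : Function.Injective ⇑σ := fun a b h => σ.toEquiv.injective h
    have hA : σ '' SL ⊆ SL := by
      rintro _ ⟨a, ha, rfl⟩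
      rcases hcases (σ a) with h | h | h | h
      · exact h
      · obtain ⟨a', ha', he⟩ := hUB (Or.inl (Or.inl h))
        exact absurd ((hinj he) ▸ ha') (fun hh => dLR a ha hh)
      · obtain ⟨a', ha', he⟩ := hUB (Or.inl (Or.inr h))
        exact absurd ((hinj he) ▸ ha') (fun hh => dLR a ha hh)
      · obtain ⟨a', ha', he⟩ := hUB (Or.inr h)
        exact absurd ((hinj he) ▸ ha') (fun hh => dLR a ha hh)
    have hM : (SL ∩ σ '' SR).Finite := by
      by_contra hMinf
      refine no_three_comps' G hconn hlf hends (S ∪ σ '' S) (hSfin.union (hSfin.image _))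
        (σ '' SL) SR (SL ∩ σ '' SR) (hLinf.image hinj.injOn) hRinf hMinf ?_ ?_ ?_ ?_ ?_ ?_
      · intro a ha b hadj
        rcases (hCompL.image σ).2.2.1 a ha b hadj with hb | hb
        · exact Or.inl hb
        · exact Or.inr (Or.inr hb)
      · intro a ha b hadj
        rcases hRclosed a ha b hadj with hb | hb
        · exact Or.inl hb
        · exact Or.inr (Or.inl hb)
      · rintro a ⟨haL, haB⟩ b hadj
        rcases (hCompR.image σ).2.2.1 a haB b hadj with hb | hb
        · rcases hLclosed a haL b hadj with hb' | hb'
          · exact Or.inl ⟨hb', hb⟩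
          · exact Or.inr (Or.inl hb')
        · exact Or.inr (Or.inr hb)
      · exact fun x hx hy => dLR x (hA hx) hy
      · rintro x ⟨a, ha, rfl⟩ ⟨_, a', ha', he⟩
        exact dLR a' ((hinj he).symm ▸ ha) ha'
      · exact fun x hx ⟨hy, _⟩ => dLR x hy hx
    have hdiff : (SL \ ⇑σ '' SL).Finite := by
      refine Set.Finite.subset ((hSfin.image ⇑σ).union ((hFfin.image ⇑σ).union hM)) ?_
      rintro x ⟨hxSL, hxA⟩
      rcases hcases (σ.symm x) with h | h | h | h
      · exact absurd ⟨σ.symm x, h, σ.apply_symm_apply x⟩ hxA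
      · exact Or.inl ⟨σ.symm x, h, σ.apply_symm_apply x⟩
      · exact Or.inr (Or.inr ⟨hxSL, σ.symm x, h, σ.apply_symm_apply x⟩)
      · exact Or.inr (Or.inl ⟨σ.symm x, h, σ.apply_symm_apply x⟩)
    refine finish σ ?_ hdiff
    intro x hx
    rcases hx with hx | hx
    · exact hA ⟨x, hx, rfl⟩
    · exact hTS ⟨x, hx, rfl⟩
  -- stage 1
  obtain ⟨v1, hv1SL, hv1far⟩ : ∃ v, v ∈ SL ∧ v ∉ SG14.ball G a0 ((2*D0+2) + D0 + 2) := by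
    obtain ⟨v, hv, hnv⟩ := (hLinf.diff (ball_finite hlf a0 _)).nonempty
    exact ⟨v, hv, hnv⟩
  obtain ⟨σ1, hmap1, hball1, hdich1⟩ := stage (2*D0+2) le_rfl v1 hv1SL hv1far
  have hinj1 : Function.Injective ⇑σ1 := fun a b h => σ1.toEquiv.injective h
  have hTS1 : σ1 '' S ⊆ SL := by
    rintro _ ⟨s, hs, rfl⟩; exact hball1 (hmap1 s (ball_mono (by omega) (hD0 (Or.inl hs))))
  have hFS1 : σ1 '' Fset ⊆ SL := by
    rintro _ ⟨s, hs, rfl⟩; exact hball1 (hmap1 s (ball_mono (by omega) (hD0 (Or.inr hs))))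
  rcases hdich1 with hflip1 | hgood1
  swap
  · exact case_good σ1 hTS1 hFS1 hgood1
  -- σ1 flips the two sides
  have hB1 : σ1 '' SR ⊆ SL := by
    rintro _ ⟨a, ha, rfl⟩
    rcases hcases (σ1 a) with h | h | h | h
    · exact h
    · obtain ⟨a', ha', he⟩ := hflip1 (Or.inl (Or.inl h))
      exact absurd ((hinj1 he) ▸ ha') (fun hh => dLR a hh ha)
    · obtain ⟨a', ha', he⟩ := hflip1 (Or.inl (Or.inr h))
      exact absurd ((hinj1 he) ▸ ha') (fun hh => dLR a hh ha)
    · obtain ⟨a', ha', he⟩ := hflip1 (Or.inr h)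
      exact absurd ((hinj1 he) ▸ ha') (fun hh => dLR a hh ha)
  have hM1 : (SL ∩ σ1 '' SL).Finite := by
    by_contra hMinf
    refine no_three_comps' G hconn hlf hends (S ∪ σ1 '' S) (hSfin.union (hSfin.image _))
      (σ1 '' SR) SR (SL ∩ σ1 '' SL) (hRinf.image hinj1.injOn) hRinf hMinf ?_ ?_ ?_ ?_ ?_ ?_
    · intro a ha b hadj
      rcases (hCompR.image σ1).2.2.1 a ha b hadj with hb | hb
      · exact Or.inl hb
      · exact Or.inr (Or.inr hb)
    · intro a ha b hadj
      rcases hRclosed a ha b hadj with hb | hb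
      · exact Or.inl hb
      · exact Or.inr (Or.inl hb)
    · rintro a ⟨haL, haB⟩ b hadj
      rcases (hCompL.image σ1).2.2.1 a haB b hadj with hb | hb
      · rcases hLclosed a haL b hadj with hb' | hb'
        · exact Or.inl ⟨hb', hb⟩
        · exact Or.inr (Or.inl hb')
      · exact Or.inr (Or.inr hb)
    · exact fun x hx hy => dLR x (hB1 hx) hy
    · rintro x ⟨a, ha, rfl⟩ ⟨_, a', ha', he⟩
      exact dLR a' ha' ((hinj1 he).symm ▸ ha)
    · exact fun x hx ⟨hy, _⟩ => dLR x hy hx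
  -- the finite "inner junk" for σ1, and a radius containing it
  have hE1fin : (⇑σ1.symm '' (SL ∩ σ1 '' SL) ∪ ⇑σ1.symm '' S).Finite :=
    (hM1.image _).union (hSfin.image _)
  obtain ⟨n1, hn1⟩ := finite_subset_ball hconn hE1fin a0
  set R1 := max n1 (2*D0+2) with hR1def
  have hR1a : 2*D0+2 ≤ R1 := le_max_right _ _
  -- stage 2
  obtain ⟨v2, hv2SL, hv2far⟩ : ∃ v, v ∈ SL ∧ v ∉ SG14.ball G a0 (R1 + D0 + 2) := by
    obtain ⟨v, hv, hnv⟩ := (hLinf.diff (ball_finite hlf a0 _)).nonempty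
    exact ⟨v, hv, hnv⟩
  obtain ⟨σ2, hmap2, hball2, hdich2⟩ := stage R1 hR1a v2 hv2SL hv2far
  have hinj2 : Function.Injective ⇑σ2 := fun a b h => σ2.toEquiv.injective h
  have hTS2 : σ2 '' S ⊆ SL := by
    rintro _ ⟨s, hs, rfl⟩; exact hball2 (hmap2 s (ball_mono (by omega) (hD0 (Or.inl hs))))
  have hFS2 : σ2 '' Fset ⊆ SL := by
    rintro _ ⟨s, hs, rfl⟩; exact hball2 (hmap2 s (ball_mono (by omega) (hD0 (Or.inr hs))))
  rcases hdich2 with hflip2 | hgood2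
  swap
  · exact case_good σ2 hTS2 hFS2 hgood2
  -- both flip: compose
  have hB2 : σ2 '' SR ⊆ SL := by
    rintro _ ⟨a, ha, rfl⟩
    rcases hcases (σ2 a) with h | h | h | h
    · exact h
    · obtain ⟨a', ha', he⟩ := hflip2 (Or.inl (Or.inl h))
      exact absurd ((hinj2 he) ▸ ha') (fun hh => dLR a hh ha)
    · obtain ⟨a', ha', he⟩ := hflip2 (Or.inl (Or.inr h))
      exact absurd ((hinj2 he) ▸ ha') (fun hh => dLR a hh ha)
    · obtain ⟨a', ha', he⟩ := hflip2 (Or.inr h)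
      exact absurd ((hinj2 he) ▸ ha') (fun hh => dLR a hh ha)
  have hM2 : (SL ∩ σ2 '' SL).Finite := by
    by_contra hMinf
    refine no_three_comps' G hconn hlf hends (S ∪ σ2 '' S) (hSfin.union (hSfin.image _))
      (σ2 '' SR) SR (SL ∩ σ2 '' SL) (hRinf.image hinj2.injOn) hRinf hMinf ?_ ?_ ?_ ?_ ?_ ?_
    · intro a ha b hadj
      rcases (hCompR.image σ2).2.2.1 a ha b hadj with hb | hb
      · exact Or.inl hb
      · exact Or.inr (Or.inr hb)
    · intro a ha b hadj
      rcases hRclosed a ha b hadj with hb | hb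
      · exact Or.inl hb
      · exact Or.inr (Or.inl hb)
    · rintro a ⟨haL, haB⟩ b hadj
      rcases (hCompL.image σ2).2.2.1 a haB b hadj with hb | hb
      · rcases hLclosed a haL b hadj with hb' | hb'
        · exact Or.inl ⟨hb', hb⟩
        · exact Or.inr (Or.inl hb')
      · exact Or.inr (Or.inr hb)
    · exact fun x hx hy => dLR x (hB2 hx) hy
    · rintro x ⟨a, ha, rfl⟩ ⟨_, a', ha', he⟩
      exact dLR a' ha' ((hinj2 he).symm ▸ ha)
    · exact fun x hx ⟨hy, _⟩ => dLR x hy hx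
  have hsubψ : ∀ x, x ∈ SL ∪ S → (σ1.symm.trans σ2) x ∈ SL := by
    intro x hx
    show σ2 (σ1.symm x) ∈ SL
    rcases hcases (σ1.symm x) with hy | hy | hy | hy
    · have hxA : x ∈ σ1 '' SL := ⟨_, hy, σ1.apply_symm_apply x⟩
      have hxE : σ1.symm x ∈ ⇑σ1.symm '' (SL ∩ σ1 '' SL) ∪ ⇑σ1.symm '' S := by
        rcases hx with hx | hx
        · exact Or.inl ⟨x, ⟨hx, hxA⟩, rfl⟩
        · exact Or.inr ⟨x, hx, rfl⟩
      have hball : σ1.symm x ∈ SG14.ball G a0 R1 :=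
        ball_mono (le_max_left _ _) (hn1 hxE)
      exact hball2 (hmap2 _ hball)
    · exact hTS2 ⟨_, hy, rfl⟩
    · exact hB2 ⟨_, hy, rfl⟩
    · exact hFS2 ⟨_, hy, rfl⟩
  have hdiffψ : (SL \ ⇑(σ1.symm.trans σ2) '' SL).Finite := by
    refine Set.Finite.subset (hM2.union ((hSfin.image ⇑σ2).union (hFfin.image ⇑σ2))) ?_
    rintro x ⟨hxSL, hxP⟩
    rcases hcases (σ2.symm x) with hy | hy | hy | hy
    · exact Or.inl ⟨hxSL, _, hy, σ2.apply_symm_apply x⟩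
    · exact Or.inr (Or.inl ⟨_, hy, σ2.apply_symm_apply x⟩)
    · exfalso
      apply hxP
      refine ⟨σ1 (σ2.symm x), hB1 ⟨_, hy, rfl⟩, ?_⟩
      show σ2 (σ1.symm (σ1 (σ2.symm x))) = x
      rw [σ1.symm_apply_apply, σ2.apply_symm_apply]
    · exact Or.inr (Or.inr ⟨_, hy, σ2.apply_symm_apply x⟩)
  exact finish (σ1.symm.trans σ2) hsubψ hdiffψ
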